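/- arXiv:2301.03521 — 4 statements merged into one kernel-verified Lean document; each statement's English description precedes it below -/
import Mathlib

section
/- Let U₀,...,U_{N−1} be invertible n×n complex matrices satisfying Uⱼ* J Uⱼ' = J where Uⱼ' is a second family (i.e., U(λ̄)* J U(λ) = J blockwise). Let 𝒰 = diag(U₀,...,U_{N−1}), 𝒰' = diag(U₀',...,U'_{N−1}), 𝒥 = diag(J,...,J) (N blocks), ℬ, ℬ' block diagonal N×N matrices of n×n blocks with ℬ − (ℬ')* = 2𝒥 entrywise-blockwise, E_⊤, E_⊥ : ℂ^{n(N+1)} → ℂ^{nN} the maps stripping the first resp. last n coordinates. Define 𝔹 = (ℬ')* 𝒰 E_⊥ + ℬ E_⊤ and 𝔻 = (1/2)(𝒰 E_⊥ + E_⊤), and similarly 𝔹' = ℬ* 𝒰' E_⊥ + ℬ' E_⊤, 𝔻' = (1/2)(𝒰' E_⊥ + E_⊤). Then (𝔻')* 𝔹 − (𝔹')* 𝔻 = diag(−J, 0, ..., 0, J) as a map on ℂ^{n(N+1)}, where the nonzero blocks are in the first and last n×n diagonal positions. -/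
open scoped Matrix

/-- The matrix stripping the first `n` components of a vector in `ℂ^{n(M+2)}`
(block index second, as in `Matrix.blockDiagonal`). -/
noncomputable def ETop (n M : ℕ) : Matrix (Fin n × Fin (M + 1)) (Fin n × Fin (M + 2)) ℂ :=
  fun p q => if q = (p.1, p.2.succ) then 1 else 0

/-- The matrix stripping the last `n` components of a vector in `ℂ^{n(M+2)}`. -/
noncomputable def EBot (n M : ℕ) : Matrix (Fin n × Fin (M + 1)) (Fin n × Fin (M + 2)) ℂ :=
  fun p q => if q = (p.1, p.2.castSucc) then 1 else 0

lemma ETopH (n M : ℕ) (q : Fin n × Fin (M+2)) (a : Fin n × Fin (M+1)) :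
    (ETop n M)ᴴ q a = if q = (a.1, a.2.succ) then 1 else 0 := by
  simp [ETop, Matrix.conjTranspose_apply, apply_ite (star : ℂ → ℂ)]

lemma EBotH (n M : ℕ) (q : Fin n × Fin (M+2)) (a : Fin n × Fin (M+1)) :
    (EBot n M)ᴴ q a = if q = (a.1, a.2.castSucc) then 1 else 0 := by
  simp [EBot, Matrix.conjTranspose_apply, apply_ite (star : ℂ → ℂ)]

lemma top_sandwich (n M : ℕ) (J : Matrix (Fin n) (Fin n) ℂ) (p q : Fin n × Fin (M+2)) :
    ((ETop n M)ᴴ * Matrix.blockDiagonal (fun _ : Fin (M+1) => J) * ETop n M) p q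
      = if p.2 = q.2 then (if p.2 = 0 then 0 else J p.1 q.1) else 0 := by
  obtain ⟨p1, p2⟩ := p
  obtain ⟨q1, q2⟩ := q
  simp only [Matrix.mul_apply, ETop, ETopH, Matrix.blockDiagonal_apply,
    Fintype.sum_prod_type, mul_ite, ite_mul, one_mul, zero_mul,
    mul_one, mul_zero, Prod.mk.injEq]
  rcases Fin.eq_zero_or_eq_succ q2 with h | ⟨j, rfl⟩
  · subst h
    simp only [Prod.ext_iff, (Fin.succ_ne_zero _).symm, and_false, if_false,
      Finset.sum_const_zero]
    split_ifs <;> simp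
  · rcases Fin.eq_zero_or_eq_succ p2 with h | ⟨i, rfl⟩
    · subst h
      simp [Prod.ext_iff, (Fin.succ_ne_zero _).symm, Fin.succ_ne_zero]
    · simp only [Prod.ext_iff, Fin.succ_inj, Fin.succ_ne_zero, if_false, ite_and,
        Finset.sum_ite_eq, Finset.sum_ite_eq', Finset.mem_univ, if_true]
      simp [eq_comm]

lemma bot_sandwich (n M : ℕ) (J : Matrix (Fin n) (Fin n) ℂ) (p q : Fin n × Fin (M+2)) :
    ((EBot n M)ᴴ * Matrix.blockDiagonal (fun _ : Fin (M+1) => J) * EBot n M) p q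
      = if p.2 = q.2 then (if p.2 = Fin.last (M+1) then 0 else J p.1 q.1) else 0 := by
  obtain ⟨p1, p2⟩ := p
  obtain ⟨q1, q2⟩ := q
  simp only [Matrix.mul_apply, EBot, EBotH, Matrix.blockDiagonal_apply,
    Fintype.sum_prod_type, mul_ite, ite_mul, one_mul, zero_mul,
    mul_one, mul_zero, Prod.mk.injEq]
  rcases Fin.eq_castSucc_or_eq_last q2 with ⟨j, rfl⟩ | h
  · rcases Fin.eq_castSucc_or_eq_last p2 with ⟨i, rfl⟩ | h
    · simp only [Prod.ext_iff, Fin.castSucc_inj, ite_and, Finset.sum_ite_eq,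
        Finset.sum_ite_eq', Finset.mem_univ, if_true]
      simp [eq_comm, Fin.castSucc_lt_last, (Fin.castSucc_lt_last _).ne]
    · subst h
      simp [Prod.ext_iff, ((Fin.castSucc_lt_last _).ne).symm, (Fin.castSucc_lt_last _).ne]
  · subst h
    simp only [Prod.ext_iff, ((Fin.castSucc_lt_last _).ne).symm, and_false, if_false,
      Finset.sum_const_zero]
    split_ifs <;> simp_all

lemma key_alg (n M : ℕ)
    (ET EB : Matrix (Fin n × Fin (M + 1)) (Fin n × Fin (M + 2)) ℂ)
    (A U U' 𝒥 : Matrix (Fin n × Fin (M + 1)) (Fin n × Fin (M + 1)) ℂ)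
    (hU : U'ᴴ * 𝒥 * U = 𝒥) :
    ((1/2 : ℂ) • (U' * EB + ET))ᴴ * ((A * U * EB) + (A + (2:ℂ) • 𝒥) * ET)
      - ((A + (2:ℂ)•𝒥)ᴴ * U' * EB + Aᴴ * ET)ᴴ * ((1/2 : ℂ) • (U * EB + ET))
      = ETᴴ * 𝒥 * ET - EBᴴ * 𝒥 * EB := by
  have hU2 : U'ᴴ * (𝒥 * (U * EB)) = 𝒥 * EB := by
    rw [← Matrix.mul_assoc, ← Matrix.mul_assoc, hU]
  simp only [Matrix.conjTranspose_smul, Matrix.conjTranspose_add, Matrix.conjTranspose_mul,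
    Matrix.conjTranspose_conjTranspose, Matrix.smul_mul, Matrix.mul_smul, Matrix.add_mul,
    Matrix.mul_add, Matrix.mul_assoc, hU2]
  simp only [smul_add, smul_smul, smul_sub]
  norm_num
  abel

/-- Lemma 2.4 (first identity): `𝔻'* 𝔹 - 𝔹'* 𝔻 = diag(-J, 0, ..., 0, J)`,
with `N = M + 1` interior points. -/
theorem stmt_4 (n M : ℕ) (J : Matrix (Fin n) (Fin n) ℂ)
    (Bf B'f Uf U'f : Fin (M + 1) → Matrix (Fin n) (Fin n) ℂ)
    (𝒥 : Matrix (Fin n × Fin (M + 1)) (Fin n × Fin (M + 1)) ℂ)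
    (h𝒥 : 𝒥 = Matrix.blockDiagonal fun _ => J)
    (hU : (Matrix.blockDiagonal U'f)ᴴ * 𝒥 * Matrix.blockDiagonal Uf = 𝒥)
    (hB : Matrix.blockDiagonal Bf - (Matrix.blockDiagonal B'f)ᴴ = (2 : ℂ) • 𝒥)
    (𝔹 𝔻 𝔹' 𝔻' : Matrix (Fin n × Fin (M + 1)) (Fin n × Fin (M + 2)) ℂ)
    (h𝔹 : 𝔹 = (Matrix.blockDiagonal B'f)ᴴ * Matrix.blockDiagonal Uf * EBot n M
      + Matrix.blockDiagonal Bf * ETop n M)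
    (h𝔻 : 𝔻 = (1/2 : ℂ) • (Matrix.blockDiagonal Uf * EBot n M + ETop n M))
    (h𝔹' : 𝔹' = (Matrix.blockDiagonal Bf)ᴴ * Matrix.blockDiagonal U'f * EBot n M
      + Matrix.blockDiagonal B'f * ETop n M)
    (h𝔻' : 𝔻' = (1/2 : ℂ) • (Matrix.blockDiagonal U'f * EBot n M + ETop n M)) :
    𝔻'ᴴ * 𝔹 - 𝔹'ᴴ * 𝔻
      = fun p q =>
        if p.2 = q.2 then
          (if p.2 = 0 then -J p.1 q.1 else if p.2 = Fin.last (M + 1) then J p.1 q.1 else 0)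
        else 0 := by
  have hBdef : Matrix.blockDiagonal Bf = (Matrix.blockDiagonal B'f)ᴴ + (2:ℂ) • 𝒥 :=
    by rw [← hB]; abel
  subst h𝔹 h𝔻 h𝔹' h𝔻'
  have hk := key_alg n M (ETop n M) (EBot n M) ((Matrix.blockDiagonal B'f)ᴴ)
    (Matrix.blockDiagonal Uf) (Matrix.blockDiagonal U'f) 𝒥 hU
  rw [Matrix.conjTranspose_conjTranspose] at hk
  rw [hBdef, hk]
  subst h𝒥
  funext p q
  simp only [Matrix.sub_apply, top_sandwich, bot_sandwich]
  rcases eq_or_ne p.2 q.2 with h | h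
  · simp only [h, if_true]
    have h0 : (Fin.last (M+1) : Fin (M+2)) ≠ 0 := by
      simp [Fin.ext_iff]
    split_ifs <;> simp_all
  · simp [h]
end

section
/- With the setup of the previous lemma (matrices 𝔹, 𝔻 : ℂ^{n(N+1)} → ℂ^{nN} built from λ, and 𝔹', 𝔻' built from λ̄, satisfying (𝒰')*𝒥𝒰 = 𝒥 and ℬ − (ℬ')* = 2𝒥, and with N ≥ 2 letting 𝔹_m', 𝔻_m' denote the matrices obtained from 𝔹', 𝔻' by deleting the first and last n columns), one has (𝔻_m')* 𝔹 − (𝔹_m')* 𝔻 = 0. -/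
open scoped Matrix

/-- The embedding `ℂ^{nM} → ℂ^{n(M+2)}` onto the middle coordinates; composing with it
deletes the first and last `n` columns of a matrix with `n(M+2)` columns. -/
noncomputable def EMid (n M : ℕ) : Matrix (Fin n × Fin (M + 2)) (Fin n × Fin M) ℂ :=
  fun p q => if p = (q.1, q.2.succ.castSucc) then 1 else 0

/-- The middle rows of `Tᴴ T` and `Lᴴ L` agree: both are identity there. -/
lemma emid_top_bot (n M : ℕ) :
    (EMid n M)ᴴ * ((ETop n M)ᴴ * ETop n M) = (EMid n M)ᴴ * ((EBot n M)ᴴ * EBot n M) := by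
  ext ⟨a, i⟩ ⟨b, j⟩
  simp only [Matrix.mul_apply, Matrix.conjTranspose_apply, ETop, EBot, EMid,
    Fintype.sum_prod_type, Prod.mk.injEq, ite_and, apply_ite (star : ℂ → ℂ),
    star_one, star_zero,
    Finset.sum_ite_eq, Finset.sum_ite_eq', Finset.mem_univ, if_true, ite_mul, mul_ite,
    one_mul, mul_one, zero_mul, mul_zero, Finset.sum_ite_irrel, Finset.sum_const_zero]
  have h1 : ∀ x : Fin (M+1), (if j = x.succ then if a = b then
      if i.succ.castSucc = x.succ then (1:ℂ) else 0 else 0 else 0)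
      = if i.castSucc = x then (if a = b then if j = i.succ.castSucc then 1 else 0 else 0) else 0 := by
    intro x; split_ifs <;> simp_all [← Fin.succ_castSucc, Fin.succ_inj]
  have h2 : ∀ x : Fin (M+1), (if j = x.castSucc then if a = b then
      if i.succ = x then (1:ℂ) else 0 else 0 else 0)
      = if i.succ = x then (if a = b then if j = i.succ.castSucc then 1 else 0 else 0) else 0 := by
    intro x; split_ifs <;> simp_all [Fin.castSucc_inj]
  simp only [h1, Fin.castSucc_inj, h2]
  simp [Finset.sum_ite_eq]

/-- Block diagonal (constant blocks) commutes past `ETop`. -/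
lemma blockDiag_mul_etop (n M : ℕ) (J : Matrix (Fin n) (Fin n) ℂ) :
    (Matrix.blockDiagonal fun _ : Fin (M+1) => J) * ETop n M
      = ETop n M * (Matrix.blockDiagonal fun _ : Fin (M+2) => J) := by
  ext ⟨a, i⟩ ⟨b, j⟩
  simp only [Matrix.mul_apply, ETop, Matrix.blockDiagonal_apply, Fintype.sum_prod_type,
    Prod.mk.injEq, ite_and, Finset.sum_ite_eq, Finset.sum_ite_eq', Finset.mem_univ, if_true,
    ite_mul, mul_ite, one_mul, mul_one, zero_mul, mul_zero, Finset.sum_ite_irrel,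
    Finset.sum_const_zero]
  have h : ∀ x : Fin (M+1), (if j = x.succ then if i = x then J a b else 0 else 0)
      = (if i = x then if j = x.succ then J a b else 0 else 0) := by
    intro x; split_ifs <;> simp_all
  simp [h, Finset.sum_ite_eq]

/-- Block diagonal (constant blocks) commutes past `EBot`. -/
lemma blockDiag_mul_ebot (n M : ℕ) (J : Matrix (Fin n) (Fin n) ℂ) :
    (Matrix.blockDiagonal fun _ : Fin (M+1) => J) * EBot n M
      = EBot n M * (Matrix.blockDiagonal fun _ : Fin (M+2) => J) := by
  ext ⟨a, i⟩ ⟨b, j⟩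
  simp only [Matrix.mul_apply, EBot, Matrix.blockDiagonal_apply, Fintype.sum_prod_type,
    Prod.mk.injEq, ite_and, Finset.sum_ite_eq, Finset.sum_ite_eq', Finset.mem_univ, if_true,
    ite_mul, mul_ite, one_mul, mul_one, zero_mul, mul_zero, Finset.sum_ite_irrel,
    Finset.sum_const_zero]
  have h : ∀ x : Fin (M+1), (if j = x.castSucc then if i = x then J a b else 0 else 0)
      = (if i = x then if j = x.castSucc then J a b else 0 else 0) := by
    intro x; split_ifs <;> simp_all
  simp [h, Finset.sum_ite_eq]

/-- Lemma 2.4 (second identity): `𝔻_m'* 𝔹 - 𝔹_m'* 𝔻 = 0`, where the subscript `m`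
denotes deletion of the first and last `n` columns. Here `N = M + 1 ≥ 2`. -/
theorem stmt_5 (n M : ℕ) (hM : 1 ≤ M) (J : Matrix (Fin n) (Fin n) ℂ)
    (Bf B'f Uf U'f : Fin (M + 1) → Matrix (Fin n) (Fin n) ℂ)
    (𝒥 : Matrix (Fin n × Fin (M + 1)) (Fin n × Fin (M + 1)) ℂ)
    (h𝒥 : 𝒥 = Matrix.blockDiagonal fun _ => J)
    (hU : (Matrix.blockDiagonal U'f)ᴴ * 𝒥 * Matrix.blockDiagonal Uf = 𝒥)
    (hB : Matrix.blockDiagonal Bf - (Matrix.blockDiagonal B'f)ᴴ = (2 : ℂ) • 𝒥)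
    (𝔹 𝔻 𝔹' 𝔻' : Matrix (Fin n × Fin (M + 1)) (Fin n × Fin (M + 2)) ℂ)
    (h𝔹 : 𝔹 = (Matrix.blockDiagonal B'f)ᴴ * Matrix.blockDiagonal Uf * EBot n M
      + Matrix.blockDiagonal Bf * ETop n M)
    (h𝔻 : 𝔻 = (1/2 : ℂ) • (Matrix.blockDiagonal Uf * EBot n M + ETop n M))
    (h𝔹' : 𝔹' = (Matrix.blockDiagonal Bf)ᴴ * Matrix.blockDiagonal U'f * EBot n M
      + Matrix.blockDiagonal B'f * ETop n M)
    (h𝔻' : 𝔻' = (1/2 : ℂ) • (Matrix.blockDiagonal U'f * EBot n M + ETop n M)) :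
    (𝔻' * EMid n M)ᴴ * 𝔹 - (𝔹' * EMid n M)ᴴ * 𝔻 = 0 := by
  set T := ETop n M
  set L := EBot n M
  set E := EMid n M
  set U := Matrix.blockDiagonal Uf
  set U' := Matrix.blockDiagonal U'f
  set B := Matrix.blockDiagonal Bf
  set B' := Matrix.blockDiagonal B'f
  -- Key identity: 𝔻'ᴴ 𝔹 - 𝔹'ᴴ 𝔻 = Tᴴ 𝒥 T - Lᴴ 𝒥 L
  have key : 𝔻'ᴴ * 𝔹 - 𝔹'ᴴ * 𝔻 = Tᴴ * (𝒥 * T) - Lᴴ * (𝒥 * L) := by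
    have e1 : 𝔻'ᴴ * 𝔹 - 𝔹'ᴴ * 𝔻
        = (1/2:ℂ) • (Lᴴ * (U'ᴴ * ((B'ᴴ - B) * (U * L))) + Tᴴ * ((B - B'ᴴ) * T)) := by
      rw [h𝔹, h𝔻, h𝔹', h𝔻']
      simp only [Matrix.conjTranspose_add, Matrix.conjTranspose_smul, Matrix.conjTranspose_mul,
        Matrix.conjTranspose_conjTranspose, Matrix.add_mul, Matrix.mul_add, Matrix.sub_mul,
        Matrix.mul_sub, Matrix.smul_mul, Matrix.mul_smul, Matrix.mul_assoc, star_div₀, star_one,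
        star_ofNat]
      module
    rw [e1, hB]
    have hB' : B'ᴴ - B = -((2:ℂ) • 𝒥) := by rw [← hB]; abel
    rw [hB']
    have hU' : U'ᴴ * (𝒥 * (U * L)) = 𝒥 * L := by
      rw [← Matrix.mul_assoc, ← Matrix.mul_assoc, hU]
    simp only [Matrix.neg_mul, Matrix.mul_neg, Matrix.smul_mul, Matrix.mul_smul,
      smul_neg, hU']
    module
  have step1 : (𝔻' * E)ᴴ * 𝔹 - (𝔹' * E)ᴴ * 𝔻 = Eᴴ * (𝔻'ᴴ * 𝔹 - 𝔹'ᴴ * 𝔻) := by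
    simp [Matrix.conjTranspose_mul, Matrix.mul_sub, Matrix.mul_assoc]
  rw [step1, key, h𝒥, blockDiag_mul_etop, blockDiag_mul_ebot]
  rw [show Tᴴ * (T * Matrix.blockDiagonal fun _ : Fin (M+2) => J)
      = (Tᴴ * T) * Matrix.blockDiagonal fun _ : Fin (M+2) => J from by rw [Matrix.mul_assoc]]
  rw [show Lᴴ * (L * Matrix.blockDiagonal fun _ : Fin (M+2) => J)
      = (Lᴴ * L) * Matrix.blockDiagonal fun _ : Fin (M+2) => J from by rw [Matrix.mul_assoc]]
  rw [Matrix.mul_sub, ← Matrix.mul_assoc Eᴴ (Tᴴ * T), ← Matrix.mul_assoc Eᴴ (Lᴴ * L),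
    emid_top_bot]
  exact sub_self _
end

section
/- With the setup above, if v ∈ ℂ^{n(N+1)} satisfies 𝔹(λ)v = 0 and 𝔻(λ)v = 0, then v = 0. Consequently the restrictions 𝔹(λ)|_{ker 𝔻(λ)} and 𝔻(λ)|_{ker 𝔹(λ)} are injective. -/
open scoped Matrix

lemma etop_mulVec (n M : ℕ) (v : Fin n × Fin (M + 2) → ℂ) :
    (ETop n M).mulVec v = fun p => v (p.1, p.2.succ) := by
  funext p
  simp [ETop, Matrix.mulVec, dotProduct, ite_mul]

lemma ebot_mulVec (n M : ℕ) (v : Fin n × Fin (M + 2) → ℂ) :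
    (EBot n M).mulVec v = fun p => v (p.1, p.2.castSucc) := by
  funext p
  simp [EBot, Matrix.mulVec, dotProduct, ite_mul]

lemma isUnit_blockDiag {k n : ℕ} (f : Fin k → Matrix (Fin n) (Fin n) ℂ)
    (hf : ∀ j, IsUnit (f j)) : IsUnit (Matrix.blockDiagonal f) := by
  have h1 : IsUnit (f : ∀ _ : Fin k, Matrix (Fin n) (Fin n) ℂ) := by
    refine ⟨⟨f, fun j => (f j)⁻¹, funext fun j => ?_, funext fun j => ?_⟩, rfl⟩
    · exact Matrix.mul_nonsing_inv (f j) ((Matrix.isUnit_iff_isUnit_det _).mp (hf j))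
    · exact Matrix.nonsing_inv_mul (f j) ((Matrix.isUnit_iff_isUnit_det _).mp (hf j))
  exact h1.map (Matrix.blockDiagonalRingHom (Fin n) (Fin k) ℂ)

lemma mulVec_eq_zero {m : Type*} [Fintype m] [DecidableEq m]
    (A : Matrix m m ℂ) (hA : IsUnit A) (v : m → ℂ) (h : A.mulVec v = 0) : v = 0 := by
  have hdet : IsUnit A.det := (Matrix.isUnit_iff_isUnit_det A).mp hA
  have h2 := congrArg (A⁻¹.mulVec) h
  rwa [Matrix.mulVec_mulVec, Matrix.nonsing_inv_mul A hdet, Matrix.one_mulVec,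
    Matrix.mulVec_zero] at h2

/-- If `𝔹(λ)v = 0` and `𝔻(λ)v = 0` then `v = 0`; hence the restrictions
`𝔹(λ)|ker 𝔻(λ)` and `𝔻(λ)|ker 𝔹(λ)` are injective. -/
theorem stmt_6 (n M : ℕ) (J : Matrix (Fin n) (Fin n) ℂ) (hJ : IsUnit J)
    (Bf B'f Uf : Fin (M + 1) → Matrix (Fin n) (Fin n) ℂ)
    (hUinv : ∀ j, IsUnit (Uf j))
    (𝒥 : Matrix (Fin n × Fin (M + 1)) (Fin n × Fin (M + 1)) ℂ)
    (h𝒥 : 𝒥 = Matrix.blockDiagonal fun _ => J)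
    (hB : Matrix.blockDiagonal Bf - (Matrix.blockDiagonal B'f)ᴴ = (2 : ℂ) • 𝒥)
    (𝔹 𝔻 : Matrix (Fin n × Fin (M + 1)) (Fin n × Fin (M + 2)) ℂ)
    (h𝔹 : 𝔹 = (Matrix.blockDiagonal B'f)ᴴ * Matrix.blockDiagonal Uf * EBot n M
      + Matrix.blockDiagonal Bf * ETop n M)
    (h𝔻 : 𝔻 = (1/2 : ℂ) • (Matrix.blockDiagonal Uf * EBot n M + ETop n M)) :
    ∀ v : Fin n × Fin (M + 2) → ℂ, 𝔹.mulVec v = 0 → 𝔻.mulVec v = 0 → v = 0 := by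
  intro v hBv hDv
  set vT : Fin n × Fin (M + 1) → ℂ := fun p => v (p.1, p.2.succ) with hvT
  set vB : Fin n × Fin (M + 1) → ℂ := fun p => v (p.1, p.2.castSucc) with hvB
  have hD' : (Matrix.blockDiagonal Uf).mulVec vB + vT = 0 := by
    rw [h𝔻, Matrix.smul_mulVec, Matrix.add_mulVec, ← Matrix.mulVec_mulVec,
      ebot_mulVec, etop_mulVec] at hDv
    have h2 := congrArg (fun w => (2 : ℂ) • w) hDv
    simpa [smul_smul] using h2
  have hUvB : (Matrix.blockDiagonal Uf).mulVec vB = -vT :=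
    eq_neg_of_add_eq_zero_left hD'
  have hB' : ((2 : ℂ) • 𝒥).mulVec vT = 0 := by
    rw [← hB, Matrix.sub_mulVec, sub_eq_zero]
    rw [h𝔹, Matrix.add_mulVec, ← Matrix.mulVec_mulVec, ← Matrix.mulVec_mulVec,
      ← Matrix.mulVec_mulVec, ebot_mulVec, etop_mulVec, ← hvB, ← hvT, hUvB,
      Matrix.mulVec_neg] at hBv
    exact (neg_add_eq_zero.mp hBv).symm
  have h𝒥v : 𝒥.mulVec vT = 0 := by
    rw [Matrix.smul_mulVec] at hB'
    have := smul_eq_zero.mp hB'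
    rcases this with h | h
    · exact absurd h two_ne_zero
    · exact h
  have hT0 : vT = 0 := by
    refine mulVec_eq_zero 𝒥 ?_ vT h𝒥v
    rw [h𝒥]; exact isUnit_blockDiag _ (fun _ => hJ)
  have hB0 : vB = 0 := by
    refine mulVec_eq_zero _ (isUnit_blockDiag Uf hUinv) vB ?_
    rw [hUvB, hT0, neg_zero]
  funext p
  obtain ⟨i, k⟩ := p
  induction k using Fin.cases with
  | zero =>
    have := congrFun hB0 (i, 0)
    simpa [hvB] using this
  | succ j =>
    have := congrFun hT0 (i, j)
    simpa using this
end

section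
/- With the setup above (Lemma 2.5 of the paper), the map v ↦ 𝔹(λ)v restricted to ker 𝔻(λ) is a bijection onto ker 𝔻_m(λ̄)*, and the map v ↦ 𝔻(λ)v restricted to ker 𝔹(λ) is a bijection onto ker 𝔹_m(λ̄)*. In particular dim ker 𝔻(λ) = dim ker 𝔻_m(λ̄)* and dim ker 𝔹(λ) = dim ker 𝔹_m(λ̄)*. -/
open scoped Matrix

open Matrix

namespace Stmt8
variable {n M : ℕ}

lemma ETop_mulVec (v : Fin n × Fin (M+2) → ℂ) (p : Fin n × Fin (M+1)) :
    (ETop n M *ᵥ v) p = v (p.1, p.2.succ) := by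
  simp [ETop, Matrix.mulVec, dotProduct, ite_mul]

lemma EBot_mulVec (v : Fin n × Fin (M+2) → ℂ) (p : Fin n × Fin (M+1)) :
    (EBot n M *ᵥ v) p = v (p.1, p.2.castSucc) := by
  simp [EBot, Matrix.mulVec, dotProduct, ite_mul]

lemma EMidT_mulVec (y : Fin n × Fin (M+2) → ℂ) (q : Fin n × Fin M) :
    ((EMid n M)ᴴ *ᵥ y) q = y (q.1, q.2.succ.castSucc) := by
  simp [EMid, Matrix.mulVec, dotProduct, Matrix.conjTranspose_apply, ite_mul, apply_ite]

lemma EBotT_mulVec (w : Fin n × Fin (M+1) → ℂ) (i : Fin n) (j : Fin (M+1)) :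
    ((EBot n M)ᴴ *ᵥ w) (i, j.castSucc) = w (i, j) := by
  have : ∀ (p : Fin n × Fin (M+1)), ((i, j.castSucc) = (p.1, p.2.castSucc)) = (p = (i,j)) := by
    intro p
    simp [Prod.ext_iff, Fin.castSucc_inj, eq_comm, and_comm]
  simp [EBot, Matrix.mulVec, dotProduct, Matrix.conjTranspose_apply, apply_ite, this]

lemma ETopT_mulVec (w : Fin n × Fin (M+1) → ℂ) (i : Fin n) (j : Fin (M+1)) :
    ((ETop n M)ᴴ *ᵥ w) (i, j.succ) = w (i, j) := by
  have : ∀ (p : Fin n × Fin (M+1)), ((i, j.succ) = (p.1, p.2.succ)) = (p = (i,j)) := by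
    intro p
    simp [Prod.ext_iff, Fin.succ_inj, eq_comm, and_comm]
  simp [ETop, Matrix.mulVec, dotProduct, Matrix.conjTranspose_apply, apply_ite, this]

lemma bd_mulVec (A : Fin (M+1) → Matrix (Fin n) (Fin n) ℂ) (v : Fin n × Fin (M+1) → ℂ)
    (i : Fin n) (j : Fin (M+1)) :
    (Matrix.blockDiagonal A *ᵥ v) (i, j) = (A j *ᵥ fun i' => v (i', j)) i := by
  simp [Matrix.mulVec, dotProduct, Matrix.blockDiagonal_apply, Fintype.sum_prod_type,
    ite_mul, Finset.sum_comm (γ := Fin (M+1))]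

section main
variable (Bf B'f Uf U'f : Fin (M+1) → Matrix (Fin n) (Fin n) ℂ)

/-- column `j` of a vector -/
def col (v : Fin n × Fin (M+2) → ℂ) (j : Fin (M+2)) : Fin n → ℂ := fun i => v (i, j)

def colm (x : Fin n × Fin (M+1) → ℂ) (j : Fin (M+1)) : Fin n → ℂ := fun i => x (i, j)

lemma B_col (v : Fin n × Fin (M+2) → ℂ) (j : Fin (M+1)) :
    colm (((Matrix.blockDiagonal B'f)ᴴ * Matrix.blockDiagonal Uf * EBot n M
      + Matrix.blockDiagonal Bf * ETop n M) *ᵥ v) j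
    = ((B'f j)ᴴ * Uf j) *ᵥ col v j.castSucc + Bf j *ᵥ col v j.succ := by
  funext i
  rw [Matrix.add_mulVec]
  show (((Matrix.blockDiagonal B'f)ᴴ * Matrix.blockDiagonal Uf * EBot n M) *ᵥ v) (i,j)
    + ((Matrix.blockDiagonal Bf * ETop n M) *ᵥ v) (i,j) = _
  rw [← mulVec_mulVec, ← mulVec_mulVec, ← mulVec_mulVec, Matrix.blockDiagonal_conjTranspose,
    bd_mulVec, bd_mulVec]
  have h1 : (fun i' => (Matrix.blockDiagonal Uf *ᵥ EBot n M *ᵥ v) (i', j))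
      = Uf j *ᵥ col v j.castSucc := by
    funext i'
    rw [bd_mulVec]
    congr 1
    funext i''
    exact EBot_mulVec v (i'', j)
  have h2 : (fun i' => (ETop n M *ᵥ v) (i', j)) = col v j.succ := by
    funext i'
    exact ETop_mulVec v (i', j)
  rw [h1, h2, mulVec_mulVec]
  simp

lemma D_col (v : Fin n × Fin (M+2) → ℂ) (j : Fin (M+1)) :
    colm (((1/2 : ℂ) • (Matrix.blockDiagonal Uf * EBot n M + ETop n M)) *ᵥ v) j
    = (1/2 : ℂ) • (Uf j *ᵥ col v j.castSucc + col v j.succ) := by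
  funext i
  rw [Matrix.smul_mulVec, Matrix.add_mulVec]
  show ((1/2:ℂ) • (((Matrix.blockDiagonal Uf * EBot n M) *ᵥ v) + (ETop n M *ᵥ v))) (i,j) = _
  have h1 : ((Matrix.blockDiagonal Uf * EBot n M) *ᵥ v) (i,j)
      = (Uf j *ᵥ col v j.castSucc) i := by
    rw [← mulVec_mulVec, bd_mulVec]
    congr 1
    funext i''
    exact EBot_mulVec v (i'', j)
  simp only [Pi.smul_apply, Pi.add_apply, Pi.smul_apply]
  rw [h1, ETop_mulVec v (i, j)]
  rfl

lemma D'adj_col (x : Fin n × Fin (M+1) → ℂ) (k : Fin M) :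
    (fun i => (((((1/2 : ℂ) • (Matrix.blockDiagonal U'f * EBot n M + ETop n M))
        * EMid n M)ᴴ) *ᵥ x) (i, k))
    = (1/2 : ℂ) • ((U'f k.succ)ᴴ *ᵥ colm x k.succ + colm x k.castSucc) := by
  funext i
  rw [Matrix.conjTranspose_mul, ← mulVec_mulVec]
  show ((EMid n M)ᴴ *ᵥ _) (i, k) = _
  rw [EMidT_mulVec]
  have hst : (star (1/2 : ℂ)) = (1/2 : ℂ) := by norm_num
  rw [Matrix.conjTranspose_smul, hst, Matrix.conjTranspose_add, Matrix.conjTranspose_mul,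
    Matrix.smul_mulVec, Matrix.add_mulVec, ← mulVec_mulVec]
  simp only [Pi.smul_apply, Pi.add_apply]
  rw [show (k.succ.castSucc : Fin (M+2)) = (k.succ).castSucc from rfl]
  rw [EBotT_mulVec, Matrix.blockDiagonal_conjTranspose, bd_mulVec]
  rw [show ((k.succ).castSucc : Fin (M+2)) = (k.castSucc).succ from (Fin.succ_castSucc k).symm]
  rw [ETopT_mulVec]
  rfl

lemma B'adj_col (y : Fin n × Fin (M+1) → ℂ) (k : Fin M) :
    (fun i => (((((Matrix.blockDiagonal Bf)ᴴ * Matrix.blockDiagonal U'f * EBot n M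
        + Matrix.blockDiagonal B'f * ETop n M)) * EMid n M)ᴴ *ᵥ y) (i, k))
    = ((U'f k.succ)ᴴ * Bf k.succ) *ᵥ colm y k.succ
      + (B'f k.castSucc)ᴴ *ᵥ colm y k.castSucc := by
  funext i
  rw [Matrix.conjTranspose_mul, ← mulVec_mulVec]
  show ((EMid n M)ᴴ *ᵥ _) (i, k) = _
  rw [EMidT_mulVec]
  rw [Matrix.conjTranspose_add, Matrix.conjTranspose_mul, Matrix.conjTranspose_mul,
    Matrix.conjTranspose_mul, Matrix.conjTranspose_conjTranspose, Matrix.add_mulVec]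
  simp only [Pi.add_apply]
  have hin : (fun i' => (Matrix.blockDiagonal Bf *ᵥ y) (i', k.succ))
      = Bf k.succ *ᵥ colm y k.succ := by
    funext i'
    rw [bd_mulVec]
    rfl
  have t1 : (((EBot n M)ᴴ * ((Matrix.blockDiagonal U'f)ᴴ * Matrix.blockDiagonal Bf)) *ᵥ y)
      (i, k.succ.castSucc) = (((U'f k.succ)ᴴ * Bf k.succ) *ᵥ colm y k.succ) i := by
    rw [← mulVec_mulVec, show (k.succ.castSucc : Fin (M+2)) = (k.succ).castSucc from rfl,
      EBotT_mulVec, ← mulVec_mulVec, Matrix.blockDiagonal_conjTranspose, bd_mulVec, hin,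
      mulVec_mulVec]
  have t2 : (((ETop n M)ᴴ * (Matrix.blockDiagonal B'f)ᴴ) *ᵥ y) (i, k.succ.castSucc)
      = ((B'f k.castSucc)ᴴ *ᵥ colm y k.castSucc) i := by
    rw [← mulVec_mulVec,
      show (k.succ.castSucc : Fin (M+2)) = (k.castSucc).succ from (Fin.succ_castSucc k).symm,
      ETopT_mulVec, Matrix.blockDiagonal_conjTranspose, bd_mulVec]
    rfl
  rw [t1, t2]

lemma keyvec (J U's Us Bs Bc Uc : Matrix (Fin n) (Fin n) ℂ) (a b c : Fin n → ℂ)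
    (hU : U'sᴴ * J * Us = J) :
    (1/2 : ℂ) • (U'sᴴ *ᵥ (((Bs - (2:ℂ)•J) * Us) *ᵥ a + Bs *ᵥ b)
        + (((Bc - (2:ℂ)•J) * Uc) *ᵥ c + Bc *ᵥ a))
    = (U'sᴴ * Bs) *ᵥ ((1/2:ℂ) • (Us *ᵥ a + b))
      + (Bc - (2:ℂ)•J) *ᵥ ((1/2:ℂ) • (Uc *ᵥ c + a)) := by
  have hX : U'sᴴ *ᵥ (J *ᵥ (Us *ᵥ a)) = J *ᵥ a := by
    rw [mulVec_mulVec, mulVec_mulVec, hU]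
  simp only [Matrix.sub_mul, Matrix.sub_mulVec, Matrix.mulVec_add, Matrix.mulVec_smul,
    Matrix.smul_mulVec, ← mulVec_mulVec, Matrix.mulVec_sub, smul_add, smul_sub] at *
  rw [← hX]
  module

lemma Kid (J : Matrix (Fin n) (Fin n) ℂ)
    (hUblk : ∀ j, (U'f j)ᴴ * J * Uf j = J)
    (hB'c : ∀ j, (B'f j)ᴴ = Bf j - (2:ℂ)•J)
    (v : Fin n × Fin (M+2) → ℂ) :
    ((((1/2 : ℂ) • (Matrix.blockDiagonal U'f * EBot n M + ETop n M)) * EMid n M)ᴴ)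
      *ᵥ (((Matrix.blockDiagonal B'f)ᴴ * Matrix.blockDiagonal Uf * EBot n M
          + Matrix.blockDiagonal Bf * ETop n M) *ᵥ v)
    = ((((Matrix.blockDiagonal Bf)ᴴ * Matrix.blockDiagonal U'f * EBot n M
          + Matrix.blockDiagonal B'f * ETop n M) * EMid n M)ᴴ)
      *ᵥ (((1/2 : ℂ) • (Matrix.blockDiagonal Uf * EBot n M + ETop n M)) *ᵥ v) := by
  funext q
  obtain ⟨i, k⟩ := q
  calc _ = ((1/2 : ℂ) • ((U'f k.succ)ᴴ *ᵥ
          colm (((Matrix.blockDiagonal B'f)ᴴ * Matrix.blockDiagonal Uf * EBot n M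
            + Matrix.blockDiagonal Bf * ETop n M) *ᵥ v) k.succ
          + colm (((Matrix.blockDiagonal B'f)ᴴ * Matrix.blockDiagonal Uf * EBot n M
            + Matrix.blockDiagonal Bf * ETop n M) *ᵥ v) k.castSucc)) i :=
        congrFun (D'adj_col U'f _ k) i
    _ = (((U'f k.succ)ᴴ * Bf k.succ) *ᵥ
          colm (((1/2 : ℂ) • (Matrix.blockDiagonal Uf * EBot n M + ETop n M)) *ᵥ v) k.succ
          + (B'f k.castSucc)ᴴ *ᵥ
          colm (((1/2 : ℂ) • (Matrix.blockDiagonal Uf * EBot n M + ETop n M)) *ᵥ v) k.castSucc) i := by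
        rw [B_col, B_col, D_col, D_col, hB'c k.succ, hB'c k.castSucc, Fin.succ_castSucc]
        exact congrFun (keyvec J (U'f k.succ) (Uf k.succ) (Bf k.succ) (Bf k.castSucc)
          (Uf k.castSucc) (col v k.succ.castSucc) (col v k.succ.succ)
          (col v k.castSucc.castSucc) (hUblk k.succ)) i
    _ = _ := (congrFun (B'adj_col Bf B'f U'f _ k) i).symm

lemma finrank_eq_of_bijOn {a b : Type*} [Fintype a] [Fintype b]
    (f : (a → ℂ) →ₗ[ℂ] (b → ℂ)) (p : Submodule ℂ (a → ℂ)) (q : Submodule ℂ (b → ℂ))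
    (h : Set.BijOn f p q) :
    Module.finrank ℂ p = Module.finrank ℂ q := by
  have hm : ∀ x ∈ p, f x ∈ q := fun x hx => h.mapsTo hx
  let g := f.restrict hm
  have hbij : Function.Bijective g := by
    constructor
    · intro u v huv
      exact Subtype.ext (h.injOn u.2 v.2 (congrArg Subtype.val huv))
    · rintro ⟨y, hy⟩
      obtain ⟨x, hx, hfx⟩ := h.surjOn hy
      exact ⟨⟨x, hx⟩, Subtype.ext hfx⟩
  exact (LinearEquiv.ofBijective g hbij).finrank_eq

end main
end Stmt8


open Stmt8

/-- Lemma 2.5: `𝔹(λ)` restricted to `ker 𝔻(λ)` is a bijection onto `ker 𝔻_m(λ̄)*`,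
and `𝔻(λ)` restricted to `ker 𝔹(λ)` is a bijection onto `ker 𝔹_m(λ̄)*`; in particular
the corresponding kernels have equal dimensions. -/
theorem stmt_8 (n M : ℕ) (J : Matrix (Fin n) (Fin n) ℂ) (hJ : IsUnit J)
    (Bf B'f Uf U'f : Fin (M + 1) → Matrix (Fin n) (Fin n) ℂ)
    (hUinv : ∀ j, IsUnit (Uf j)) (hU'inv : ∀ j, IsUnit (U'f j))
    (𝒥 : Matrix (Fin n × Fin (M + 1)) (Fin n × Fin (M + 1)) ℂ)
    (h𝒥 : 𝒥 = Matrix.blockDiagonal fun _ => J)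
    (hU : (Matrix.blockDiagonal U'f)ᴴ * 𝒥 * Matrix.blockDiagonal Uf = 𝒥)
    (hB : Matrix.blockDiagonal Bf - (Matrix.blockDiagonal B'f)ᴴ = (2 : ℂ) • 𝒥)
    (𝔹 𝔻 𝔹' 𝔻' : Matrix (Fin n × Fin (M + 1)) (Fin n × Fin (M + 2)) ℂ)
    (h𝔹 : 𝔹 = (Matrix.blockDiagonal B'f)ᴴ * Matrix.blockDiagonal Uf * EBot n M
      + Matrix.blockDiagonal Bf * ETop n M)
    (h𝔻 : 𝔻 = (1/2 : ℂ) • (Matrix.blockDiagonal Uf * EBot n M + ETop n M))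
    (h𝔹' : 𝔹' = (Matrix.blockDiagonal Bf)ᴴ * Matrix.blockDiagonal U'f * EBot n M
      + Matrix.blockDiagonal B'f * ETop n M)
    (h𝔻' : 𝔻' = (1/2 : ℂ) • (Matrix.blockDiagonal U'f * EBot n M + ETop n M)) :
    Set.BijOn 𝔹.mulVec (LinearMap.ker 𝔻.mulVecLin) (LinearMap.ker ((𝔻' * EMid n M)ᴴ).mulVecLin) ∧
    Set.BijOn 𝔻.mulVec (LinearMap.ker 𝔹.mulVecLin) (LinearMap.ker ((𝔹' * EMid n M)ᴴ).mulVecLin) ∧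
    Module.finrank ℂ (LinearMap.ker 𝔻.mulVecLin)
      = Module.finrank ℂ (LinearMap.ker ((𝔻' * EMid n M)ᴴ).mulVecLin) ∧
    Module.finrank ℂ (LinearMap.ker 𝔹.mulVecLin)
      = Module.finrank ℂ (LinearMap.ker ((𝔹' * EMid n M)ᴴ).mulVecLin) := by
  subst h𝒥 h𝔹 h𝔻 h𝔹' h𝔻'
  have hdetJ : IsUnit J.det := (Matrix.isUnit_iff_isUnit_det J).mp hJ
  have hdetU : ∀ j, IsUnit (Uf j).det := fun j => (Matrix.isUnit_iff_isUnit_det _).mp (hUinv j)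
  have hUblk : ∀ j, (U'f j)ᴴ * J * Uf j = J := by
    intro j
    rw [Matrix.blockDiagonal_conjTranspose, ← Matrix.blockDiagonal_mul,
      ← Matrix.blockDiagonal_mul] at hU
    exact congrFun (Matrix.blockDiagonal_injective hU) j
  have hBblk : ∀ j, Bf j - (B'f j)ᴴ = (2:ℂ) • J := by
    intro j
    rw [Matrix.blockDiagonal_conjTranspose, ← Matrix.blockDiagonal_sub,
      ← Matrix.blockDiagonal_smul] at hB
    have := congrFun (Matrix.blockDiagonal_injective hB) j
    simpa using this
  have hB'c : ∀ j, (B'f j)ᴴ = Bf j - (2:ℂ) • J := by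
    intro j
    rw [← hBblk j]
    abel
  have hUJinv : ∀ j, Uf j * J⁻¹ * (U'f j)ᴴ = J⁻¹ := by
    intro j
    have h1 : (U'f j)ᴴ = J * (Uf j)⁻¹ * J⁻¹ := by
      calc (U'f j)ᴴ = (U'f j)ᴴ * J * Uf j * (Uf j)⁻¹ * J⁻¹ := by
            rw [Matrix.mul_assoc ((U'f j)ᴴ * J), Matrix.mul_nonsing_inv _ (hdetU j),
              Matrix.mul_one, Matrix.mul_assoc, Matrix.mul_nonsing_inv _ hdetJ, Matrix.mul_one]
        _ = J * (Uf j)⁻¹ * J⁻¹ := by rw [hUblk j]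
    rw [h1]
    calc Uf j * J⁻¹ * (J * (Uf j)⁻¹ * J⁻¹)
        = Uf j * (J⁻¹ * J) * ((Uf j)⁻¹ * J⁻¹) := by
          simp only [Matrix.mul_assoc]
      _ = J⁻¹ := by
          rw [Matrix.nonsing_inv_mul _ hdetJ, Matrix.mul_one, ← Matrix.mul_assoc,
            Matrix.mul_nonsing_inv _ (hdetU j), Matrix.one_mul]
  have hJv : ∀ x : Fin n → ℂ, J *ᵥ x = 0 → x = 0 := by
    intro x hx
    have h2 := congrArg (fun y => J⁻¹ *ᵥ y) hx
    simpa [mulVec_mulVec, Matrix.nonsing_inv_mul _ hdetJ] using h2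
  have hUv : ∀ j (x : Fin n → ℂ), Uf j *ᵥ x = 0 → x = 0 := by
    intro j x hx
    have h2 := congrArg (fun y => (Uf j)⁻¹ *ᵥ y) hx
    simpa [mulVec_mulVec, Matrix.nonsing_inv_mul _ (hdetU j)] using h2
  -- membership characterizations
  have hDmem : ∀ v : Fin n × Fin (M+2) → ℂ, ((1/2 : ℂ) • (Matrix.blockDiagonal Uf * EBot n M + ETop n M)) *ᵥ v = 0 ↔
      ∀ j : Fin (M+1), Uf j *ᵥ col v j.castSucc + col v j.succ = 0 := by
    intro v
    constructor
    · intro h j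
      have h1 : colm (((1/2 : ℂ) • (Matrix.blockDiagonal Uf * EBot n M + ETop n M)) *ᵥ v) j = 0 := by rw [h]; rfl
      rw [D_col] at h1
      rcases smul_eq_zero.mp h1 with h2 | h2
      · norm_num at h2
      · exact h2
    · intro h
      funext q
      obtain ⟨i, j⟩ := q
      calc (((1/2 : ℂ) • (Matrix.blockDiagonal Uf * EBot n M + ETop n M)) *ᵥ v) (i, j)
          = ((1/2 : ℂ) • (Uf j *ᵥ col v j.castSucc + col v j.succ)) i := congrFun (D_col Uf v j) i
        _ = 0 := by rw [h j]; simp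
  have hBmem : ∀ v : Fin n × Fin (M+2) → ℂ, ((Matrix.blockDiagonal B'f)ᴴ * Matrix.blockDiagonal Uf * EBot n M + Matrix.blockDiagonal Bf * ETop n M) *ᵥ v = 0 ↔
      ∀ j : Fin (M+1), ((B'f j)ᴴ * Uf j) *ᵥ col v j.castSucc + Bf j *ᵥ col v j.succ = 0 := by
    intro v
    constructor
    · intro h j
      have h1 : colm (((Matrix.blockDiagonal B'f)ᴴ * Matrix.blockDiagonal Uf * EBot n M + Matrix.blockDiagonal Bf * ETop n M) *ᵥ v) j = 0 := by rw [h]; rfl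
      rwa [B_col] at h1
    · intro h
      funext q
      obtain ⟨i, j⟩ := q
      calc (((Matrix.blockDiagonal B'f)ᴴ * Matrix.blockDiagonal Uf * EBot n M + Matrix.blockDiagonal Bf * ETop n M) *ᵥ v) (i, j)
          = (((B'f j)ᴴ * Uf j) *ᵥ col v j.castSucc + Bf j *ᵥ col v j.succ) i :=
            congrFun (B_col Bf B'f Uf v j) i
        _ = 0 := by rw [h j]; rfl
  have hD'mem : ∀ x : Fin n × Fin (M+1) → ℂ, (((1/2 : ℂ) • (Matrix.blockDiagonal U'f * EBot n M + ETop n M)) * EMid n M)ᴴ *ᵥ x = 0 ↔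
      ∀ k : Fin M, (U'f k.succ)ᴴ *ᵥ colm x k.succ + colm x k.castSucc = 0 := by
    intro x
    constructor
    · intro h k
      have h1 : (fun i => (((((1/2 : ℂ) • (Matrix.blockDiagonal U'f * EBot n M + ETop n M)) * EMid n M)ᴴ) *ᵥ x) (i, k)) = 0 := by rw [h]; rfl
      rw [D'adj_col] at h1
      rcases smul_eq_zero.mp h1 with h2 | h2
      · norm_num at h2
      · exact h2
    · intro h
      funext q
      obtain ⟨i, k⟩ := q
      calc (((((1/2 : ℂ) • (Matrix.blockDiagonal U'f * EBot n M + ETop n M)) * EMid n M)ᴴ) *ᵥ x) (i, k)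
          = ((1/2 : ℂ) • ((U'f k.succ)ᴴ *ᵥ colm x k.succ + colm x k.castSucc)) i :=
            congrFun (D'adj_col U'f x k) i
        _ = 0 := by rw [h k]; simp
  -- triviality of the intersection of kernels
  have hzero : ∀ v : Fin n × Fin (M+2) → ℂ,
      ((1/2 : ℂ) • (Matrix.blockDiagonal Uf * EBot n M + ETop n M)) *ᵥ v = 0 → ((Matrix.blockDiagonal B'f)ᴴ * Matrix.blockDiagonal Uf * EBot n M + Matrix.blockDiagonal Bf * ETop n M) *ᵥ v = 0 → v = 0 := by
    intro v hD0 hB0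
    have h1 := (hDmem v).mp hD0
    have h2 := (hBmem v).mp hB0
    have hs : ∀ j : Fin (M+1), col v j.succ = 0 ∧ col v j.castSucc = 0 := by
      intro j
      have e1 : Uf j *ᵥ col v j.castSucc = -(col v j.succ) := eq_neg_of_add_eq_zero_left (h1 j)
      have e2 := h2 j
      rw [← mulVec_mulVec, e1, Matrix.mulVec_neg] at e2
      have e3 : (Bf j - (B'f j)ᴴ) *ᵥ col v j.succ = 0 := by
        rw [Matrix.sub_mulVec, sub_eq_neg_add]
        exact e2
      rw [hBblk j, Matrix.smul_mulVec] at e3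
      have e4 : J *ᵥ col v j.succ = 0 := by
        rcases smul_eq_zero.mp e3 with h4 | h4
        · norm_num at h4
        · exact h4
      have e5 : col v j.succ = 0 := hJv _ e4
      have e6 : Uf j *ᵥ col v j.castSucc = 0 := by rw [e1, e5, neg_zero]
      exact ⟨e5, hUv j _ e6⟩
    funext q
    obtain ⟨i, p⟩ := q
    cases p using Fin.lastCases with
    | last =>
      show v (i, Fin.last (M+1)) = 0
      rw [← Fin.succ_last]
      exact congrFun (hs (Fin.last M)).1 i
    | cast q =>
      exact congrFun (hs q).2 i
  -- surjectivity of the first map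
  have hsurj1 : ∀ x : Fin n × Fin (M+1) → ℂ, (((1/2 : ℂ) • (Matrix.blockDiagonal U'f * EBot n M + ETop n M)) * EMid n M)ᴴ *ᵥ x = 0 →
      ∃ v, ((1/2 : ℂ) • (Matrix.blockDiagonal Uf * EBot n M + ETop n M)) *ᵥ v = 0 ∧ ((Matrix.blockDiagonal B'f)ᴴ * Matrix.blockDiagonal Uf * EBot n M + Matrix.blockDiagonal Bf * ETop n M) *ᵥ v = x := by
    intro x hx
    have hxk := (hD'mem x).mp hx
    set w : Fin (M+2) → Fin n → ℂ := fun p => Fin.induction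
        ((-(1/2 : ℂ)) • (((Uf 0)⁻¹ * J⁻¹) *ᵥ colm x 0))
        (fun j wj => -(Uf j *ᵥ wj)) p with hwdef
    have hw0 : w 0 = (-(1/2 : ℂ)) • (((Uf 0)⁻¹ * J⁻¹) *ᵥ colm x 0) := rfl
    have hwsucc : ∀ j : Fin (M+1), w j.succ = -(Uf j *ᵥ w j.castSucc) := by
      intro j
      rw [hwdef]
      exact Fin.induction_succ _ _ j
    set v : Fin n × Fin (M+2) → ℂ := fun q => w q.2 q.1 with hv
    have hcol : ∀ p, col v p = w p := fun p => rfl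
    have hDv : ((1/2 : ℂ) • (Matrix.blockDiagonal Uf * EBot n M + ETop n M)) *ᵥ v = 0 := by
      rw [hDmem]
      intro j
      rw [hcol, hcol, hwsucc j]
      simp
    have hkey : ∀ j : Fin (M+1), Uf j *ᵥ w j.castSucc = (-(1/2 : ℂ)) • (J⁻¹ *ᵥ colm x j) := by
      intro j
      induction j using Fin.induction with
      | zero =>
        rw [Fin.castSucc_zero, hw0, Matrix.mulVec_smul, mulVec_mulVec, ← Matrix.mul_assoc,
          Matrix.mul_nonsing_inv _ (hdetU 0), Matrix.one_mul]
      | succ j ih =>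
        rw [← Fin.succ_castSucc, hwsucc j.castSucc, Matrix.mulVec_neg, ih]
        have hc : colm x j.castSucc = -((U'f j.succ)ᴴ *ᵥ colm x j.succ) :=
          eq_neg_of_add_eq_zero_right (hxk j)
        rw [hc]
        have : Uf j.succ *ᵥ (J⁻¹ *ᵥ ((U'f j.succ)ᴴ *ᵥ colm x j.succ))
            = J⁻¹ *ᵥ colm x j.succ := by
          rw [mulVec_mulVec, mulVec_mulVec, hUJinv j.succ]
        simp only [Matrix.mulVec_neg, Matrix.mulVec_smul, smul_neg, neg_neg]
        rw [this]
    have hBv : ((Matrix.blockDiagonal B'f)ᴴ * Matrix.blockDiagonal Uf * EBot n M + Matrix.blockDiagonal Bf * ETop n M) *ᵥ v = x := by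
      funext q
      obtain ⟨i, j⟩ := q
      have hvec : ((B'f j)ᴴ * Uf j) *ᵥ col v j.castSucc + Bf j *ᵥ col v j.succ = colm x j := by
        rw [hcol, hcol, hwsucc j, ← mulVec_mulVec, hkey j, Matrix.mulVec_neg, hB'c j,
          Matrix.sub_mulVec, Matrix.smul_mulVec]
        have hJJ : J *ᵥ ((-(1/2:ℂ)) • (J⁻¹ *ᵥ colm x j)) = (-(1/2:ℂ)) • colm x j := by
          rw [Matrix.mulVec_smul, mulVec_mulVec, Matrix.mul_nonsing_inv _ hdetJ,
            Matrix.one_mulVec]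
        rw [hJJ]
        module
      calc (((Matrix.blockDiagonal B'f)ᴴ * Matrix.blockDiagonal Uf * EBot n M + Matrix.blockDiagonal Bf * ETop n M) *ᵥ v) (i, j)
          = (((B'f j)ᴴ * Uf j) *ᵥ col v j.castSucc + Bf j *ᵥ col v j.succ) i :=
            congrFun (B_col Bf B'f Uf v j) i
        _ = x (i, j) := congrFun hvec i
    exact ⟨v, hDv, hBv⟩
  -- surjectivity of 𝔻
  have hDsurj : ∀ y : Fin n × Fin (M+1) → ℂ, ∃ u, ((1/2 : ℂ) • (Matrix.blockDiagonal Uf * EBot n M + ETop n M)) *ᵥ u = y := by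
    intro y
    set w : Fin (M+2) → Fin n → ℂ := fun p => Fin.induction 0
        (fun j wj => (2:ℂ) • colm y j - Uf j *ᵥ wj) p with hwdef
    have hwsucc : ∀ j : Fin (M+1), w j.succ = (2:ℂ) • colm y j - Uf j *ᵥ w j.castSucc := by
      intro j
      rw [hwdef]
      exact Fin.induction_succ _ _ j
    refine ⟨fun q => w q.2 q.1, ?_⟩
    funext q
    obtain ⟨i, j⟩ := q
    calc (((1/2 : ℂ) • (Matrix.blockDiagonal Uf * EBot n M + ETop n M)) *ᵥ fun q => w q.2 q.1) (i, j)
        = ((1/2 : ℂ) • (Uf j *ᵥ col (fun q => w q.2 q.1) j.castSucc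
            + col (fun q => w q.2 q.1) j.succ)) i := congrFun (D_col Uf _ j) i
      _ = y (i, j) := by
          have h1 : col (fun q => w q.2 q.1) j.succ = w j.succ := rfl
          have h2 : col (fun q => w q.2 q.1) j.castSucc = w j.castSucc := rfl
          rw [h1, h2, hwsucc j]
          have : Uf j *ᵥ w j.castSucc + ((2:ℂ) • colm y j - Uf j *ᵥ w j.castSucc)
              = (2:ℂ) • colm y j := by abel
          rw [this]
          show (1/2 : ℂ) * ((2:ℂ) * y (i, j)) = y (i, j)
          ring
  -- the key intertwining identity
  have hKid := Kid Bf B'f Uf U'f J hUblk hB'c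
  -- membership translations
  have hmemD : ∀ v, v ∈ (LinearMap.ker ((1/2 : ℂ) • (Matrix.blockDiagonal Uf * EBot n M + ETop n M)).mulVecLin : Set (Fin n × Fin (M+2) → ℂ)) ↔
      ((1/2 : ℂ) • (Matrix.blockDiagonal Uf * EBot n M + ETop n M)) *ᵥ v = 0 := by
    intro v
    rw [SetLike.mem_coe, LinearMap.mem_ker, Matrix.mulVecLin_apply]
  have hmemB : ∀ v, v ∈ (LinearMap.ker ((Matrix.blockDiagonal B'f)ᴴ * Matrix.blockDiagonal Uf * EBot n M + Matrix.blockDiagonal Bf * ETop n M).mulVecLin : Set (Fin n × Fin (M+2) → ℂ)) ↔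
      ((Matrix.blockDiagonal B'f)ᴴ * Matrix.blockDiagonal Uf * EBot n M + Matrix.blockDiagonal Bf * ETop n M) *ᵥ v = 0 := by
    intro v
    rw [SetLike.mem_coe, LinearMap.mem_ker, Matrix.mulVecLin_apply]
  have hmemD' : ∀ x, x ∈ (LinearMap.ker ((((1/2 : ℂ) • (Matrix.blockDiagonal U'f * EBot n M + ETop n M)) * EMid n M)ᴴ).mulVecLin :
      Set (Fin n × Fin (M+1) → ℂ)) ↔ (((1/2 : ℂ) • (Matrix.blockDiagonal U'f * EBot n M + ETop n M)) * EMid n M)ᴴ *ᵥ x = 0 := by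
    intro x
    rw [SetLike.mem_coe, LinearMap.mem_ker, Matrix.mulVecLin_apply]
  have hmemB' : ∀ x, x ∈ (LinearMap.ker ((((Matrix.blockDiagonal Bf)ᴴ * Matrix.blockDiagonal U'f * EBot n M + Matrix.blockDiagonal B'f * ETop n M) * EMid n M)ᴴ).mulVecLin :
      Set (Fin n × Fin (M+1) → ℂ)) ↔ (((Matrix.blockDiagonal Bf)ᴴ * Matrix.blockDiagonal U'f * EBot n M + Matrix.blockDiagonal B'f * ETop n M) * EMid n M)ᴴ *ᵥ x = 0 := by
    intro x
    rw [SetLike.mem_coe, LinearMap.mem_ker, Matrix.mulVecLin_apply]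
  have bij1 : Set.BijOn ((Matrix.blockDiagonal B'f)ᴴ * Matrix.blockDiagonal Uf * EBot n M + Matrix.blockDiagonal Bf * ETop n M).mulVec (LinearMap.ker ((1/2 : ℂ) • (Matrix.blockDiagonal Uf * EBot n M + ETop n M)).mulVecLin)
      (LinearMap.ker ((((1/2 : ℂ) • (Matrix.blockDiagonal U'f * EBot n M + ETop n M)) * EMid n M)ᴴ).mulVecLin) := by
    refine ⟨?_, ?_, ?_⟩
    · intro v hv
      rw [hmemD] at hv
      rw [hmemD']
      show (((1/2 : ℂ) • (Matrix.blockDiagonal U'f * EBot n M + ETop n M)) * EMid n M)ᴴ *ᵥ (((Matrix.blockDiagonal B'f)ᴴ * Matrix.blockDiagonal Uf * EBot n M + Matrix.blockDiagonal Bf * ETop n M) *ᵥ v) = 0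
      rw [hKid v, hv, Matrix.mulVec_zero]
    · intro u hu v hv huv
      rw [hmemD] at hu hv
      have hsub : ((1/2 : ℂ) • (Matrix.blockDiagonal Uf * EBot n M + ETop n M)) *ᵥ (u - v) = 0 := by
        rw [Matrix.mulVec_sub, hu, hv, sub_zero]
      have hsubB : ((Matrix.blockDiagonal B'f)ᴴ * Matrix.blockDiagonal Uf * EBot n M + Matrix.blockDiagonal Bf * ETop n M) *ᵥ (u - v) = 0 := by
        rw [Matrix.mulVec_sub]
        rw [show ((Matrix.blockDiagonal B'f)ᴴ * Matrix.blockDiagonal Uf * EBot n M + Matrix.blockDiagonal Bf * ETop n M).mulVec u = ((Matrix.blockDiagonal B'f)ᴴ * Matrix.blockDiagonal Uf * EBot n M + Matrix.blockDiagonal Bf * ETop n M).mulVec v from huv]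
        exact sub_self _
      have := hzero _ hsub hsubB
      exact sub_eq_zero.mp this
    · intro x hx
      rw [hmemD'] at hx
      obtain ⟨v, h1, h2⟩ := hsurj1 x hx
      exact ⟨v, (hmemD v).mpr h1, h2⟩
  have bij2 : Set.BijOn ((1/2 : ℂ) • (Matrix.blockDiagonal Uf * EBot n M + ETop n M)).mulVec (LinearMap.ker ((Matrix.blockDiagonal B'f)ᴴ * Matrix.blockDiagonal Uf * EBot n M + Matrix.blockDiagonal Bf * ETop n M).mulVecLin)
      (LinearMap.ker ((((Matrix.blockDiagonal Bf)ᴴ * Matrix.blockDiagonal U'f * EBot n M + Matrix.blockDiagonal B'f * ETop n M) * EMid n M)ᴴ).mulVecLin) := by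
    refine ⟨?_, ?_, ?_⟩
    · intro v hv
      rw [hmemB] at hv
      rw [hmemB']
      show (((Matrix.blockDiagonal Bf)ᴴ * Matrix.blockDiagonal U'f * EBot n M + Matrix.blockDiagonal B'f * ETop n M) * EMid n M)ᴴ *ᵥ (((1/2 : ℂ) • (Matrix.blockDiagonal Uf * EBot n M + ETop n M)) *ᵥ v) = 0
      rw [← hKid v, hv, Matrix.mulVec_zero]
    · intro u hu v hv huv
      rw [hmemB] at hu hv
      have hsubB : ((Matrix.blockDiagonal B'f)ᴴ * Matrix.blockDiagonal Uf * EBot n M + Matrix.blockDiagonal Bf * ETop n M) *ᵥ (u - v) = 0 := by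
        rw [Matrix.mulVec_sub, hu, hv, sub_zero]
      have hsubD : ((1/2 : ℂ) • (Matrix.blockDiagonal Uf * EBot n M + ETop n M)) *ᵥ (u - v) = 0 := by
        rw [Matrix.mulVec_sub]
        rw [show ((1/2 : ℂ) • (Matrix.blockDiagonal Uf * EBot n M + ETop n M)).mulVec u = ((1/2 : ℂ) • (Matrix.blockDiagonal Uf * EBot n M + ETop n M)).mulVec v from huv]
        exact sub_self _
      have := hzero _ hsubD hsubB
      exact sub_eq_zero.mp this
    · intro y hy
      rw [hmemB'] at hy
      obtain ⟨u, hu⟩ := hDsurj y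
      have hker : (((1/2 : ℂ) • (Matrix.blockDiagonal U'f * EBot n M + ETop n M)) * EMid n M)ᴴ *ᵥ (((Matrix.blockDiagonal B'f)ᴴ * Matrix.blockDiagonal Uf * EBot n M + Matrix.blockDiagonal Bf * ETop n M) *ᵥ u) = 0 := by
        rw [hKid u, hu, hy]
      obtain ⟨v0, hv0D, hv0B⟩ := hsurj1 (((Matrix.blockDiagonal B'f)ᴴ * Matrix.blockDiagonal Uf * EBot n M + Matrix.blockDiagonal Bf * ETop n M) *ᵥ u) hker
      refine ⟨u - v0, ?_, ?_⟩
      · rw [hmemB]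
        show ((Matrix.blockDiagonal B'f)ᴴ * Matrix.blockDiagonal Uf * EBot n M + Matrix.blockDiagonal Bf * ETop n M) *ᵥ (u - v0) = 0
        rw [Matrix.mulVec_sub, hv0B, sub_self]
      · show ((1/2 : ℂ) • (Matrix.blockDiagonal Uf * EBot n M + ETop n M)) *ᵥ (u - v0) = y
        rw [Matrix.mulVec_sub, hu, hv0D, sub_zero]
  refine ⟨bij1, bij2, ?_, ?_⟩
  · refine finrank_eq_of_bijOn ((Matrix.blockDiagonal B'f)ᴴ * Matrix.blockDiagonal Uf * EBot n M + Matrix.blockDiagonal Bf * ETop n M).mulVecLin _ _ ?_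
    rw [Matrix.coe_mulVecLin]
    exact bij1
  · refine finrank_eq_of_bijOn ((1/2 : ℂ) • (Matrix.blockDiagonal Uf * EBot n M + ETop n M)).mulVecLin _ _ ?_
    rw [Matrix.coe_mulVecLin]
    exact bij2
end
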